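/- Let D be a pseudometric on a finite set X of even cardinality with the property that for any pseudometric D' on X with D' ≤ D (pointwise) and D' ≠ D one has m(X,D') < m(X,D). Then for all distinct points i,j ∈ X, the pair {i,j} belongs to some minimal matching of (X,D). -/

import Mathlib

/-- A matching on `X`: a partition of `X` into two-element subsets,
encoded as a fixed-point-free involution. -/
def IsMatching {X : Type*} (π : X → X) : Prop :=
  Function.Involutive π ∧ ∀ x, π x ≠ x

/-- The matching number of a matching `π` with respect to `d`:
`∑_{{x,y} ∈ π} d(x,y)` (each pair is counted twice in the sum, whence the division). -/
noncomputable def matchVal {X : Type*} [Fintype X] (d : X → X → ℝ) (π : X → X) : ℝ :=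
  (∑ x, d x (π x)) / 2

/-- The matching number `m(X,d)`: the minimum of `m(π,d)` over all matchings `π` on `X`. -/
noncomputable def matchNum {X : Type*} [Fintype X] (d : X → X → ℝ) : ℝ :=
  sInf {r | ∃ π : X → X, IsMatching π ∧ r = matchVal d π}

/-- `d` is a pseudometric on `X`. -/
def IsPseudometric {X : Type*} (d : X → X → ℝ) : Prop :=
  (∀ x, d x x = 0) ∧ (∀ x y, d x y = d y x) ∧ ∀ x y z, d x z ≤ d x y + d y z

set_option linter.unusedSectionVars false

section Aux
variable {X : Type*} [Fintype X]

lemma pseudo_nonneg {D : X → X → ℝ} (hD : IsPseudometric D) (x y : X) : 0 ≤ D x y := by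
  obtain ⟨h0, hs, htr⟩ := hD
  have h1 := htr x y x
  have h2 := h0 x
  have h3 := hs y x
  linarith

lemma exists_matching (hX : Even (Fintype.card X)) : ∃ π : X → X, IsMatching π := by
  classical
  obtain ⟨k, hk⟩ := hX
  have hcard : Fintype.card X = Fintype.card (Fin k × Bool) := by
    rw [Fintype.card_prod, Fintype.card_fin, Fintype.card_bool, hk]; ring
  obtain e := Fintype.equivOfCardEq hcard
  refine ⟨fun x => e.symm ((e x).1, !(e x).2), ⟨?_, ?_⟩⟩
  · intro x; simp
  · intro x h
    rw [Equiv.symm_apply_eq] at h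
    have := congrArg Prod.snd h
    simp at this

lemma matchSet_finite (D : X → X → ℝ) :
    {r | ∃ π : X → X, IsMatching π ∧ r = matchVal D π}.Finite := by
  have : {r | ∃ π : X → X, IsMatching π ∧ r = matchVal D π}
      = (matchVal D) '' {π | IsMatching π} := by
    ext r
    constructor
    · rintro ⟨π, h1, h2⟩; exact ⟨π, h1, h2.symm⟩
    · rintro ⟨π, h1, h2⟩; exact ⟨π, h1, h2.symm⟩
  rw [this]
  exact (Set.toFinite _).image _

lemma matchNum_le (D : X → X → ℝ) {π : X → X} (hπ : IsMatching π) :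
    matchNum D ≤ matchVal D π :=
  csInf_le (matchSet_finite D).bddBelow ⟨π, hπ, rfl⟩

lemma exists_minimal (hX : Even (Fintype.card X)) (D : X → X → ℝ) :
    ∃ π : X → X, IsMatching π ∧ matchVal D π = matchNum D := by
  obtain ⟨π0, h0⟩ := exists_matching hX
  have hne : {r | ∃ π : X → X, IsMatching π ∧ r = matchVal D π}.Nonempty := ⟨_, π0, h0, rfl⟩
  obtain ⟨π, hπ, hv⟩ := hne.csInf_mem (matchSet_finite D)
  exact ⟨π, hπ, hv.symm⟩

lemma le_matchNum (hX : Even (Fintype.card X)) (D : X → X → ℝ) {M : ℝ}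
    (h : ∀ π : X → X, IsMatching π → M ≤ matchVal D π) : M ≤ matchNum D := by
  obtain ⟨π0, h0⟩ := exists_matching hX
  exact le_csInf ⟨_, π0, h0, rfl⟩ (by rintro r ⟨π, hπ, rfl⟩; exact h π hπ)

end Aux
section Swap
variable {X : Type*} [Fintype X]

lemma swap_exists (D : X → X → ℝ) (hsym : ∀ u v, D u v = D v u)
    {π : X → X} (hπ : IsMatching π) {a b : X} (hab : a ≠ b) (hb : π a ≠ b) :
    ∃ π' : X → X, IsMatching π' ∧ π' a = b ∧
      (∀ x, x ≠ a → x ≠ b → x ≠ π a → x ≠ π b → π' x = π x) ∧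
      matchVal D π' = matchVal D π + (D a b + D (π a) (π b) - D a (π a) - D b (π b)) := by
  classical
  obtain ⟨hinv, hfp⟩ := hπ
  set τ := Equiv.swap (π a) b with hτ
  have haa : a ≠ π a := (hfp a).symm
  have hba : b ≠ π a := Ne.symm hb
  have hπba : π b ≠ a := by
    intro h
    have h2 : π (π b) = π a := congrArg π h
    rw [hinv] at h2
    exact hba h2
  have hπbb : π b ≠ b := hfp b
  have hπaπb : π a ≠ π b := by
    intro h
    have := congrArg π h
    rw [hinv, hinv] at this
    exact hab this
  have τa : τ a = a := Equiv.swap_apply_of_ne_of_ne haa hab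
  have τb : τ b = π a := Equiv.swap_apply_right _ _
  have τπa : τ (π a) = b := Equiv.swap_apply_left _ _
  have τπb : τ (π b) = π b := Equiv.swap_apply_of_ne_of_ne (Ne.symm hπaπb) hπbb
  have hpres : ∀ x, x ≠ a → x ≠ b → x ≠ π a → x ≠ π b →
      τ (π (τ x)) = π x := by
    intro x hxa hxb hxπa hxπb
    have τx : τ x = x := Equiv.swap_apply_of_ne_of_ne hxπa hxb
    rw [τx]
    apply Equiv.swap_apply_of_ne_of_ne
    · intro h; exact hxa (by have := congrArg π h; rwa [hinv, hinv] at this)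
    · intro h; exact hxπb (by have := congrArg π h; rwa [hinv] at this)
  refine ⟨fun x => τ (π (τ x)), ⟨?_, ?_⟩, ?_, hpres, ?_⟩
  · intro x
    show τ (π (τ (τ (π (τ x))))) = x
    rw [Equiv.swap_apply_self, hinv, Equiv.swap_apply_self]
  · intro x h
    have h2 : π (τ x) = τ x := by
      have := congrArg τ h
      rwa [Equiv.swap_apply_self] at this
    exact hfp _ h2
  · show τ (π (τ a)) = b
    rw [τa, τπa]
  · -- matchVal computation
    have s4 : ({a, b, π a, π b} : Finset X).Nonempty := ⟨a, by simp⟩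
    have hsum1 : ∑ x ∈ ({a, b, π a, π b} : Finset X), (D x (τ (π (τ x))) - D x (π x))
        = ∑ x ∈ Finset.univ, (D x (τ (π (τ x))) - D x (π x)) := by
      apply Finset.sum_subset (Finset.subset_univ _)
      intro x _ hx
      simp only [Finset.mem_insert, Finset.mem_singleton, not_or] at hx
      rw [hpres x hx.1 hx.2.1 hx.2.2.1 hx.2.2.2, sub_self]
    have hsum2 : ∑ x ∈ ({a, b, π a, π b} : Finset X), (D x (τ (π (τ x))) - D x (π x))
        = 2 * D a b + 2 * D (π a) (π b) - 2 * D a (π a) - 2 * D b (π b) := by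
      rw [show ({a, b, π a, π b} : Finset X) = insert a (insert b (insert (π a) {π b})) from rfl]
      rw [Finset.sum_insert (by simp [hab, haa, hπba.symm]),
          Finset.sum_insert (by simp [hba, hπbb.symm]),
          Finset.sum_insert (by simp [hπaπb]), Finset.sum_singleton]
      have e1 : τ (π (τ a)) = b := by rw [τa, τπa]
      have e2 : τ (π (τ b)) = a := by rw [τb, hinv, τa]
      have e3 : τ (π (τ (π a))) = π b := by rw [τπa, τπb]
      have e4 : τ (π (τ (π b))) = π a := by rw [τπb, hinv, τb]
      rw [e1, e2, e3, e4, hinv a, hinv b]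
      have := hsym b a
      have := hsym (π a) a
      have := hsym (π b) (π a)
      have := hsym (π b) b
      linarith
    have hsum3 : ∑ x ∈ Finset.univ, (D x (τ (π (τ x))) - D x (π x))
        = (∑ x, D x (τ (π (τ x)))) - ∑ x, D x (π x) := Finset.sum_sub_distrib _ _
    show (∑ x, D x (τ (π (τ x)))) / 2 = (∑ x, D x (π x)) / 2 + _
    rw [hsum1, hsum3] at hsum2
    linarith

end Swap

section Shortcut
variable {X : Type*} [Fintype X]

lemma min3_cases (a b d : ℝ) : min a (min b d) = a ∨ min a (min b d) = b ∨ min a (min b d) = d := by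
  rcases le_total a (min b d) with h | h
  · left; exact min_eq_left h
  · rcases le_total b d with h2 | h2
    · right; left; rw [min_eq_right h, min_eq_left h2]
    · right; right; rw [min_eq_right h, min_eq_right h2]

noncomputable def shortcut (D : X → X → ℝ) (i j : X) (c : ℝ) : X → X → ℝ :=
  fun x y => min (D x y) (min (D x i + c + D j y) (D x j + c + D i y))

lemma shortcut_pseudo {D : X → X → ℝ} (hD : IsPseudometric D) {i j : X} {c : ℝ}
    (hc : 0 ≤ c) : IsPseudometric (shortcut D i j c) := by
  obtain ⟨h0, hs, htr⟩ := hD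
  have hnn : ∀ x y, 0 ≤ D x y := pseudo_nonneg ⟨h0, hs, htr⟩
  refine ⟨?_, ?_, ?_⟩
  · intro x
    show min (D x x) (min (D x i + c + D j x) (D x j + c + D i x)) = 0
    rw [h0 x]
    apply min_eq_left
    have := hnn x i; have := hnn j x; have := hnn x j; have := hnn i x
    exact le_min (by linarith) (by linarith)
  · intro x y
    show min (D x y) (min (D x i + c + D j y) (D x j + c + D i y))
        = min (D y x) (min (D y i + c + D j x) (D y j + c + D i x))
    have e1 : D y x = D x y := hs y x
    have e2 : D y i + c + D j x = D x j + c + D i y := by rw [hs y i, hs j x]; ring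
    have e3 : D y j + c + D i x = D x i + c + D j y := by rw [hs y j, hs i x]; ring
    rw [e1, e2, e3, min_comm (D x j + c + D i y)]
  · intro x y z
    show min (D x z) (min (D x i + c + D j z) (D x j + c + D i z))
        ≤ min (D x y) (min (D x i + c + D j y) (D x j + c + D i y))
          + min (D y z) (min (D y i + c + D j z) (D y j + c + D i z))
    have b1 : min (D x z) (min (D x i + c + D j z) (D x j + c + D i z)) ≤ D x z :=
      min_le_left _ _
    have b2 : min (D x z) (min (D x i + c + D j z) (D x j + c + D i z))
        ≤ D x i + c + D j z := le_trans (min_le_right _ _) (min_le_left _ _)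
    have b3 : min (D x z) (min (D x i + c + D j z) (D x j + c + D i z))
        ≤ D x j + c + D i z := le_trans (min_le_right _ _) (min_le_right _ _)
    have t1 := htr x y z
    have t2 := htr x y i
    have t3 := htr x y j
    have t4 := htr j y z
    have t5 := htr i y z
    have t6 := htr x i z
    have t7 := htr x j z
    have n1 := hnn j y; have n2 := hnn y i; have n3 := hnn i y; have n4 := hnn y j
    have s1 := hs y i; have s2 := hs y j
    rcases min3_cases (D x y) (D x i + c + D j y) (D x j + c + D i y) with h1 | h1 | h1 <;>
      rcases min3_cases (D y z) (D y i + c + D j z) (D y j + c + D i z) with h2 | h2 | h2 <;>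
      rw [h1, h2] <;> linarith

lemma shortcut_le (D : X → X → ℝ) (i j : X) (c : ℝ) (x y : X) :
    shortcut D i j c x y ≤ D x y := min_le_left _ _

end Shortcut

section Key
variable {X : Type*} [Fintype X]

lemma key_lemma (D : X → X → ℝ) (hD : IsPseudometric D)
    {π : X → X} (hπ : IsMatching π) (hv : matchVal D π = matchNum D)
    {i j : X} (hij : i ≠ j) (hpos : 0 < D i j) {x : X}
    (heq : D x (π x) = D x i + D i j + D j (π x)) :
    ∃ π' : X → X, IsMatching π' ∧ matchVal D π' = matchNum D ∧ π' i = j := by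
  obtain ⟨h0, hs, htr⟩ := hD
  by_cases hπij : π i = j
  · exact ⟨π, hπ, hv, hπij⟩
  by_cases hxj : x = j
  · exfalso
    rw [hxj] at heq
    have := hs j i
    linarith
  by_cases hyi : π x = i
  · exfalso
    rw [hyi] at heq
    have := hs j i
    linarith
  by_cases hxi : x = i
  · rw [hxi] at heq
    obtain ⟨π', hπ', hi', _, hval⟩ := swap_exists D hs hπ hij hπij
    have t1 : D (π i) (π j) ≤ D (π i) j + D j (π j) := htr _ _ _
    have e0 := h0 i
    have s1 := hs (π i) j
    have s2 := hs i (π i)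
    -- heq : D i (π i) = D i i + D i j + D j (π i)
    have hle : matchVal D π' ≤ matchNum D := by rw [hval, hv]; linarith
    exact ⟨π', hπ', le_antisymm hle (matchNum_le D hπ'), hi'⟩
  by_cases hyj : π x = j
  · have hxpj : π j = x := by rw [← hyj, hπ.1]
    obtain ⟨π', hπ', hi', _, hval⟩ := swap_exists D hs hπ hij hπij
    rw [hxpj] at hval
    have t1 : D (π i) x ≤ D (π i) i + D i x := htr _ _ _
    have e0 := h0 j
    have s1 := hs (π i) i
    have s2 := hs i x
    have s3 := hs j x
    rw [hyj] at heq
    -- heq : D x j = D x i + D i j + D j j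
    have hle : matchVal D π' ≤ matchNum D := by rw [hval, hv]; linarith
    exact ⟨π', hπ', le_antisymm hle (matchNum_le D hπ'), hi'⟩
  · -- general case
    have hπy : π (π x) = x := hπ.1 x
    obtain ⟨π₂, hπ₂, hyi2, hpres2, hval2⟩ := swap_exists D hs hπ hyi (by rw [hπy]; exact hxi)
    rw [hπy, hv] at hval2
    -- hval2 : matchVal D π₂ = matchNum D + (D (π x) i + D x (π i) - D (π x) x - D i (π i))
    have hge2 := matchNum_le D hπ₂
    have T1 : D x (π i) ≤ D x i + D i (π i) := htr _ _ _
    have T2 : D (π x) i ≤ D (π x) j + D j i := htr _ _ _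
    have s1 := hs (π x) x
    have s2 := hs (π x) j
    have s3 := hs j i
    have hle2 : matchVal D π₂ ≤ matchNum D := by linarith
    have hIy : D i j + D j (π x) ≤ D (π x) i := by linarith
    have hv2 : matchVal D π₂ = matchNum D := le_antisymm hle2 hge2
    have hπ₂i : π₂ i = π x := by rw [← hyi2, hπ₂.1]
    have hπ₂j : π₂ j = π j := by
      apply hpres2 j (Ne.symm hyj) (Ne.symm hij) (fun h => hxj (by rw [hπy] at h; exact h.symm))
        (fun h => hπij h.symm)
    obtain ⟨π₃, hπ₃, hi3, _, hval3⟩ := swap_exists D hs hπ₂ hij (by rw [hπ₂i]; exact hyj)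
    rw [hπ₂i, hπ₂j, hv2] at hval3
    -- hval3 : matchVal D π₃ = matchNum D + (D i j + D (π x) (π j) - D i (π x) - D j (π j))
    have T3 : D (π x) (π j) ≤ D (π x) j + D j (π j) := htr _ _ _
    have s4 := hs i (π x)
    have hle3 : matchVal D π₃ ≤ matchNum D := by linarith
    exact ⟨π₃, hπ₃, le_antisymm hle3 (matchNum_le D hπ₃), hi3⟩

end Key


/-- If `D` is a pseudometric on `X` (even finite cardinality) such that every pseudometric
`D' ≤ D` with `D' ≠ D` has a strictly smaller matching number, then every pair of distinct
points `{i,j}` belongs to some minimal matching of `(X,D)`. -/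
theorem stmt6 {X : Type*} [Fintype X] (hX : Even (Fintype.card X))
    (D : X → X → ℝ) (hD : IsPseudometric D)
    (hmin : ∀ D' : X → X → ℝ, IsPseudometric D' → (∀ x y, D' x y ≤ D x y) → D' ≠ D →
      matchNum D' < matchNum D) :
    ∀ i j : X, i ≠ j → ∃ π : X → X, IsMatching π ∧ matchVal D π = matchNum D ∧ π i = j := by
  classical
  obtain ⟨h0, hs, htr⟩ := hD
  intro i j hij
  by_contra hcon
  push_neg at hcon
  -- hcon : ∀ π, IsMatching π → matchVal D π = matchNum D → π i ≠ j
  have hD : IsPseudometric D := ⟨h0, hs, htr⟩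
  obtain ⟨π0, hπ0, hv0⟩ := exists_minimal hX D
  have hne : Nonempty X := ⟨i⟩
  have hDijpos : 0 < D i j := by
    rcases (pseudo_nonneg hD i j).lt_or_eq with h | h
    · exact h
    · exfalso
      have hb : π0 i ≠ j := hcon π0 hπ0 hv0
      obtain ⟨π', hπ', hi', _, hval⟩ := swap_exists D hs hπ0 hij hb
      have h1 : D (π0 i) (π0 j) ≤ D (π0 i) i + D i (π0 j) := htr _ _ _
      have h2 : D i (π0 j) ≤ D i j + D j (π0 j) := htr _ _ _
      have s1 := hs (π0 i) i
      have hle : matchVal D π' ≤ matchNum D := by rw [hval, hv0]; linarith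
      exact hcon π' hπ' (le_antisymm hle (matchNum_le D hπ')) hi'
  have hg : ∀ π : X → X, ∀ x : X, IsMatching π → matchVal D π = matchNum D →
      0 < D x i + D i j + D j (π x) - D x (π x) := by
    intro π x hπ hvπ
    have h1 : D x (π x) ≤ D x i + D i (π x) := htr _ _ _
    have h2 : D i (π x) ≤ D i j + D j (π x) := htr _ _ _
    have hnn : 0 ≤ D x i + D i j + D j (π x) - D x (π x) := by linarith
    rcases hnn.lt_or_eq with h | h
    · exact h
    · exfalso
      have heq : D x (π x) = D x i + D i j + D j (π x) := by linarith
      obtain ⟨π', hπ', hv', hi'⟩ := key_lemma D hD hπ hvπ hij hDijpos heq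
      exact hcon π' hπ' hv' hi'
  set M := matchNum D with hM
  set n := Fintype.card X with hn
  have hnpos : 0 < (n : ℝ) := by
    have : 0 < n := Fintype.card_pos
    exact_mod_cast this
  set A : Set ℝ := (fun p : (X → X) × X =>
      D p.2 i + D i j + D j (p.1 p.2) - D p.2 (p.1 p.2)) ''
      {p | IsMatching p.1 ∧ matchVal D p.1 = M} with hA
  set B : Set ℝ := (fun π : X → X => (matchVal D π - M) * 2 / (n : ℝ)) ''
      {π | IsMatching π ∧ matchVal D π ≠ M} with hB
  set T : Set ℝ := insert (D i j) (A ∪ B) with hT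
  have hTfin : T.Finite :=
    Set.Finite.insert _ (((Set.toFinite _).image _).union ((Set.toFinite _).image _))
  have hTne : T.Nonempty := ⟨D i j, Set.mem_insert _ _⟩
  have hTpos : ∀ r ∈ T, 0 < r := by
    intro r hr
    rcases hr with h | h
    · rw [h]; exact hDijpos
    rcases h with h | h
    · obtain ⟨⟨π, x⟩, ⟨hπ, hvπ⟩, rfl⟩ := h
      exact hg π x hπ hvπ
    · obtain ⟨π, ⟨hπ, hvπ⟩, rfl⟩ := h
      have : 0 < matchVal D π - M :=
        sub_pos.mpr (lt_of_le_of_ne (matchNum_le D hπ) (Ne.symm hvπ))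
      exact div_pos (by linarith) hnpos
  set t := sInf T with ht
  have ht_pos : 0 < t := hTpos _ (hTne.csInf_mem hTfin)
  have ht_le : ∀ r ∈ T, t ≤ r := fun r hr => csInf_le hTfin.bddBelow hr
  have htij : t ≤ D i j := ht_le _ (Set.mem_insert _ _)
  set c := D i j - t with hc
  set D' := shortcut D i j c with hD'def
  have hD' : IsPseudometric D' := shortcut_pseudo hD (by linarith)
  have hle : ∀ x y, D' x y ≤ D x y := shortcut_le D i j c
  have hlow : ∀ x y, D x y - t ≤ D' x y := by
    intro x y
    have t1 : D x y ≤ D x i + D i y := htr _ _ _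
    have t2 : D i y ≤ D i j + D j y := htr _ _ _
    have t3 : D x y ≤ D x j + D j y := htr _ _ _
    have t4 : D j y ≤ D j i + D i y := htr _ _ _
    have s1 := hs j i
    show D x y - t ≤ min (D x y) (min (D x i + c + D j y) (D x j + c + D i y))
    exact le_min (by linarith) (le_min (by linarith) (by linarith))
  have hgeM : ∀ π : X → X, IsMatching π → M ≤ matchVal D' π := by
    intro π hπ
    by_cases hvπ : matchVal D π = M
    · have hpt : ∀ x, D' x (π x) = D x (π x) := by
        intro x
        have ht1 : t ≤ D x i + D i j + D j (π x) - D x (π x) :=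
          ht_le _ (Set.mem_insert_iff.mpr (Or.inr (Set.mem_union_left _
            ⟨(π, x), ⟨hπ, hvπ⟩, rfl⟩)))
        have ht2' : t ≤ D (π x) i + D i j + D j (π (π x)) - D (π x) (π (π x)) :=
          ht_le _ (Set.mem_insert_iff.mpr (Or.inr (Set.mem_union_left _
            ⟨(π, π x), ⟨hπ, hvπ⟩, rfl⟩)))
        rw [hπ.1 x] at ht2'
        have s1 := hs (π x) i
        have s2 := hs j x
        have s3 := hs (π x) x
        show min (D x (π x)) (min (D x i + c + D j (π x)) (D x j + c + D i (π x)))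
            = D x (π x)
        apply min_eq_left
        exact le_min (by linarith) (by linarith)
      have : matchVal D' π = matchVal D π := by
        unfold matchVal
        rw [Finset.sum_congr rfl fun x _ => hpt x]
      rw [this, hvπ]
    · have hvgt : M < matchVal D π :=
        lt_of_le_of_ne (matchNum_le D hπ) (Ne.symm hvπ)
      have htv : t ≤ (matchVal D π - M) * 2 / (n : ℝ) :=
        ht_le _ (Set.mem_insert_iff.mpr (Or.inr (Set.mem_union_right _
          ⟨π, ⟨hπ, hvπ⟩, rfl⟩)))
      have hsum : ∑ x, (D x (π x) - t) ≤ ∑ x, D' x (π x) :=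
        Finset.sum_le_sum fun x _ => hlow _ _
      have hsum2 : ∑ x : X, (D x (π x) - t) = (∑ x, D x (π x)) - (n : ℝ) * t := by
        rw [Finset.sum_sub_distrib, Finset.sum_const, Finset.card_univ]
        simp [hn]
      have hnt : t * (n : ℝ) ≤ (matchVal D π - M) * 2 := (le_div_iff₀ hnpos).mp htv
      have hv' : matchVal D π = (∑ x, D x (π x)) / 2 := rfl
      have hv'' : matchVal D' π = (∑ x, D' x (π x)) / 2 := rfl
      rw [hv''] at *
      rw [hv'] at hvgt hnt
      linarith [hsum, hsum2]
  have hMle : M ≤ matchNum D' := le_matchNum hX D' hgeM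
  have hne' : D' ≠ D := by
    intro hEq
    have h2 : D' i j ≤ c := by
      show min (D i j) (min (D i i + c + D j j) (D i j + c + D i j)) ≤ c
      calc min (D i j) (min (D i i + c + D j j) (D i j + c + D i j))
          ≤ D i i + c + D j j := le_trans (min_le_right _ _) (min_le_left _ _)
        _ = c := by rw [h0 i, h0 j]; ring
    rw [hEq] at h2
    have : c = D i j - t := hc
    linarith
  have := hmin D' hD' hle hne'
  linarith
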